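/- Let M be a weight sequence and γ > 0 be such that the sequence (m_p/(p+1)^γ)_{p≥0} is almost increasing, i.e., there exists a > 0 with m_p/(p+1)^γ ≤ a·m_q/(q+1)^γ for all q ≥ p. Then γ ≤ ω(M) = liminf_{p→∞} log(m_p)/log(p). -/

import Mathlib

open Filter Real

/-- If `(m p / (p+1)^γ)` is almost increasing for a weight sequence `M`,
then `γ ≤ ω(M)`. -/
theorem almostIncreasing_le_omega (M : ℕ → ℝ) (γ : ℝ)
    (hpos : ∀ p, 0 < M p) (hM0 : M 0 = 1)
    (hlc : ∀ p : ℕ, 1 ≤ p → (M p) ^ 2 ≤ M (p - 1) * M (p + 1))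
    (htend : Tendsto (fun p => M (p + 1) / M p) atTop atTop)
    (hγ : 0 < γ)
    (hai : ∃ a > (0 : ℝ), ∀ p q : ℕ, p ≤ q →
      (M (p + 1) / M p) / (p + 1 : ℝ) ^ γ ≤ a * ((M (q + 1) / M q) / (q + 1 : ℝ) ^ γ)) :
    (γ : EReal) ≤ liminf (fun p : ℕ =>
        ((Real.log (M (p + 1) / M p) / Real.log p : ℝ) : EReal)) atTop := by
  obtain ⟨a, ha, hai⟩ := hai
  set C : ℝ := (M 1 / M 0) / a with hC
  have hCpos : 0 < C := div_pos (div_pos (hpos 1) (hpos 0)) ha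
  have hkey : ∀ p : ℕ, C * ((p : ℝ) + 1) ^ γ ≤ M (p + 1) / M p := by
    intro p
    have h := hai 0 p (Nat.zero_le p)
    have h1 : (((0 : ℕ) : ℝ) + 1) ^ γ = 1 := by
      norm_num
    rw [h1, div_one] at h
    have hp1 : (0 : ℝ) < ((p : ℝ) + 1) ^ γ :=
      Real.rpow_pos_of_pos (by positivity) _
    have h2 : C ≤ (M (p + 1) / M p) / ((p : ℝ) + 1) ^ γ := by
      rw [hC, div_le_iff₀ ha]
      linarith [h]
    calc C * ((p : ℝ) + 1) ^ γ
        ≤ ((M (p + 1) / M p) / ((p : ℝ) + 1) ^ γ) * ((p : ℝ) + 1) ^ γ := by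
          exact mul_le_mul_of_nonneg_right h2 hp1.le
      _ = M (p + 1) / M p := div_mul_cancel₀ _ hp1.ne'
  -- auxiliary sequence
  set g : ℕ → ℝ := fun p => γ + Real.log C / Real.log p with hg
  have hgto : Tendsto g atTop (nhds γ) := by
    have hlog : Tendsto (fun p : ℕ => Real.log p) atTop atTop :=
      Real.tendsto_log_atTop.comp tendsto_natCast_atTop_atTop
    have h0 : Tendsto (fun p : ℕ => Real.log C / Real.log p) atTop (nhds 0) := by
      simpa [div_eq_mul_inv] using hlog.inv_tendsto_atTop.const_mul (Real.log C)
    simpa using tendsto_const_nhds.add h0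
  have hglim : liminf (fun p : ℕ => ((g p : ℝ) : EReal)) atTop = (γ : EReal) := by
    have : Tendsto (fun p : ℕ => ((g p : ℝ) : EReal)) atTop (nhds (γ : EReal)) :=
      (EReal.tendsto_coe).2 hgto
    exact this.liminf_eq
  have hev : ∀ᶠ p : ℕ in atTop,
      ((g p : ℝ) : EReal) ≤ ((Real.log (M (p + 1) / M p) / Real.log p : ℝ) : EReal) := by
    filter_upwards [eventually_ge_atTop 2] with p hp
    rw [EReal.coe_le_coe_iff]
    have hplog : 0 < Real.log p :=
      Real.log_pos (by exact_mod_cast hp.trans_lt' one_lt_two)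
    have hp1 : (0 : ℝ) < (p : ℝ) + 1 := by positivity
    have hmain : Real.log C + γ * Real.log p ≤ Real.log (M (p + 1) / M p) := by
      have h1 : Real.log (C * ((p : ℝ) + 1) ^ γ) ≤ Real.log (M (p + 1) / M p) :=
        Real.log_le_log (by positivity) (hkey p)
      have h2 : Real.log (C * ((p : ℝ) + 1) ^ γ)
          = Real.log C + γ * Real.log ((p : ℝ) + 1) := by
        rw [Real.log_mul hCpos.ne' (Real.rpow_pos_of_pos hp1 _).ne',
          Real.log_rpow hp1]
      have h3 : Real.log (p : ℝ) ≤ Real.log ((p : ℝ) + 1) :=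
        Real.log_le_log (by positivity) (by linarith)
      nlinarith [h3, hγ.le]
    have h4 : (Real.log C + γ * Real.log p) / Real.log p
        ≤ Real.log (M (p + 1) / M p) / Real.log p :=
      (div_le_div_iff_of_pos_right hplog).2 hmain
    rw [add_div, mul_div_assoc, div_self hplog.ne', mul_one] at h4
    simpa [hg, add_comm] using h4
  calc (γ : EReal) = liminf (fun p : ℕ => ((g p : ℝ) : EReal)) atTop := hglim.symm
    _ ≤ _ := liminf_le_liminf hev
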